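/- Let n be a positive integer and let ℓ, r : Fin n → ℕ be such that for every i, 1 ≤ ℓ i < r i, and the 2n values ℓ 0, …, ℓ (n−1), r 0, …, r (n−1) are pairwise distinct. For each i let R i be the ray in ℝ² starting at (ℓ i, (ℓ i)!) with direction (r i, (r i)!) − (ℓ i, (ℓ i)!). Then for all i ≠ j: R i ∩ R j ≠ ∅ if and only if the pairs (ℓ i, r i) and (ℓ j, r j) interleave, i.e. ℓ i < ℓ j < r i < r j or ℓ j < ℓ i < r j < r i. -/

import Mathlib

/-- The point `(x, x!)` in the plane. -/
noncomputable def factPt (x : ℕ) : ℝ × ℝ := ((x : ℝ), (Nat.factorial x : ℝ))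

/-- The ray with origin `p` and direction `v`: `{p + t • v : t ≥ 0}`. -/
def ray (p v : ℝ × ℝ) : Set (ℝ × ℝ) := {z | ∃ t : ℝ, 0 ≤ t ∧ z = p + t • v}

namespace Stmt5Aux

/-- Chord slope of the factorial curve between `a` and `b`. -/
noncomputable def sl (a b : ℕ) : ℝ := ((b.factorial : ℝ) - a.factorial) / ((b : ℝ) - a)

lemma fact_lb (a b : ℕ) (ha : 1 ≤ a) (hab : a < b) :
    (b - a) * (b-1).factorial + a.factorial ≤ b.factorial := by
  have hb : 0 < b := lt_of_le_of_lt (Nat.zero_le a) hab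
  have h1 : a.factorial ≤ a * (b-1).factorial := by
    calc a.factorial = a * (a-1).factorial := (Nat.mul_factorial_pred (n := a) (by omega)).symm
    _ ≤ a * (b-1).factorial := Nat.mul_le_mul_left a (Nat.factorial_le (by omega))
  calc (b-a) * (b-1).factorial + a.factorial
      ≤ (b-a) * (b-1).factorial + a * (b-1).factorial := by omega
    _ = b * (b-1).factorial := by rw [← Nat.add_mul]; congr 1; omega
    _ = b.factorial := Nat.mul_factorial_pred hb.ne'

lemma cast_lt {a b : ℕ} (h : a < b) : (a : ℝ) < b := by exact_mod_cast h

lemma slope_lb (a b : ℕ) (ha : 1 ≤ a) (hab : a < b) :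
    ((b-1).factorial : ℝ) ≤ sl a b := by
  have hba : (0:ℝ) < (b:ℝ) - a := by linarith [cast_lt hab]
  rw [sl, le_div_iff₀ hba]
  have h := fact_lb a b ha hab
  have : ((b - a : ℕ) : ℝ) = (b:ℝ) - a := by
    push_cast [Nat.cast_sub hab.le]; ring
  nlinarith [this, (by exact_mod_cast h :
    ((b - a : ℕ) : ℝ) * (b-1).factorial + a.factorial ≤ b.factorial)]

lemma slope_ub (a b : ℕ) (hab : a < b) : sl a b < (b.factorial : ℝ) := by
  have hba : (0:ℝ) < (b:ℝ) - a := by linarith [cast_lt hab]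
  rw [sl, div_lt_iff₀ hba]
  have h1 : (1:ℝ) ≤ (b:ℝ) - a := by
    have : a + 1 ≤ b := hab
    have := cast_lt hab
    have : ((a:ℝ) + 1) ≤ b := by exact_mod_cast (by omega : a + 1 ≤ b)
    linarith
  have h2 : (0:ℝ) < a.factorial := by exact_mod_cast a.factorial_pos
  have h3 : (0:ℝ) < b.factorial := by exact_mod_cast b.factorial_pos
  nlinarith

/-- Slopes are strictly ordered by right endpoints. -/
lemma slope_lt (a b c d : ℕ) (ha : 1 ≤ a) (hab : a < b) (hc : 1 ≤ c) (hcd : c < d)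
    (hbd : b < d) : sl a b < sl c d := by
  have h1 := slope_ub a b hab
  have h2 := slope_lb c d hc hcd
  have h3 : (b.factorial : ℝ) ≤ (d-1).factorial := by
    exact_mod_cast Nat.factorial_le (by omega)
  linarith

lemma fact_eq (a m : ℕ) (ham : a < m) :
    (m.factorial : ℝ) = a.factorial + sl a m * ((m : ℝ) - a) := by
  have hma : (0:ℝ) < (m:ℝ) - a := by linarith [cast_lt ham]
  rw [sl, div_mul_cancel₀]
  · ring
  · linarith

/-- Strict convexity: a point strictly inside a chord is below the chord. -/
lemma conv_between (a m b : ℕ) (ha : 1 ≤ a) (ham : a < m) (hmb : m < b) :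
    (m.factorial : ℝ) < a.factorial + sl a b * ((m : ℝ) - a) := by
  have h := slope_lt a m a b ha ham ha (ham.trans hmb) hmb
  have hma : (0:ℝ) < (m:ℝ) - a := by linarith [cast_lt ham]
  rw [fact_eq a m ham]
  nlinarith

/-- Strict convexity: a point strictly beyond a chord is above the chord line. -/
lemma conv_beyond (a b m : ℕ) (ha : 1 ≤ a) (hab : a < b) (hbm : b < m) :
    a.factorial + sl a b * ((m : ℝ) - a) < (m.factorial : ℝ) := by
  have h := slope_lt a b a m ha hab ha (hab.trans hbm) hbm
  have hma : (0:ℝ) < (m:ℝ) - a := by linarith [cast_lt (hab.trans hbm)]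
  rw [fact_eq a m (hab.trans hbm)]
  nlinarith

lemma mem_ray_iff (a b : ℕ) (hab : a < b) (z : ℝ × ℝ) :
    z ∈ ray (factPt a) (factPt b - factPt a) ↔
      (a : ℝ) ≤ z.1 ∧ z.2 = a.factorial + sl a b * (z.1 - (a : ℝ)) := by
  have hba : (0:ℝ) < (b:ℝ) - a := by linarith [cast_lt hab]
  simp only [ray, factPt, Set.mem_setOf_eq, Prod.ext_iff, Prod.fst_add, Prod.snd_add,
    Prod.fst_sub, Prod.snd_sub, Prod.smul_fst, Prod.smul_snd, smul_eq_mul]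
  constructor
  · rintro ⟨t, ht, h1, h2⟩
    constructor
    · nlinarith
    · rw [h2, h1, sl]
      field_simp
      ring
  · rintro ⟨h1, h2⟩
    refine ⟨(z.1 - a) / ((b:ℝ) - a), div_nonneg (by linarith) hba.le, by field_simp; ring, ?_⟩
    rw [h2, sl]
    field_simp

lemma key (a₁ b₁ a₂ b₂ : ℕ) (ha₁ : 1 ≤ a₁) (h₁ : a₁ < b₁) (ha₂ : 1 ≤ a₂) (h₂ : a₂ < b₂)
    (h12 : a₁ < a₂) (hba : b₁ ≠ a₂) (hbb : b₁ ≠ b₂) :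
    (ray (factPt a₁) (factPt b₁ - factPt a₁) ∩
      ray (factPt a₂) (factPt b₂ - factPt a₂)).Nonempty ↔ (a₂ < b₁ ∧ b₁ < b₂) := by
  constructor
  · rintro ⟨z, hz₁, hz₂⟩
    rw [mem_ray_iff _ _ h₁] at hz₁
    rw [mem_ray_iff _ _ h₂] at hz₂
    obtain ⟨hx₁, hy₁⟩ := hz₁
    obtain ⟨hx₂, hy₂⟩ := hz₂
    have E : (a₁.factorial : ℝ) + sl a₁ b₁ * (z.1 - a₁) =
        a₂.factorial + sl a₂ b₂ * (z.1 - a₂) := by rw [← hy₁, hy₂]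
    have hab : a₂ < b₁ := by
      by_contra hcon
      have hb1a2 : b₁ < a₂ := by omega
      have hs : sl a₁ b₁ < sl a₂ b₂ := slope_lt _ _ _ _ ha₁ h₁ ha₂ h₂ (by omega)
      have hD : (a₁.factorial : ℝ) + sl a₁ b₁ * ((a₂:ℝ) - a₁) < a₂.factorial :=
        conv_beyond a₁ b₁ a₂ ha₁ h₁ hb1a2
      nlinarith
    refine ⟨hab, ?_⟩
    by_contra hcon
    have hb2b1 : b₂ < b₁ := by omega
    have hs : sl a₂ b₂ < sl a₁ b₁ := slope_lt _ _ _ _ ha₂ h₂ ha₁ h₁ hb2b1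
    have hD : (a₂.factorial : ℝ) < a₁.factorial + sl a₁ b₁ * ((a₂:ℝ) - a₁) :=
      conv_between a₁ a₂ b₁ ha₁ h12 hab
    nlinarith
  · rintro ⟨hab, hbb'⟩
    have hs : sl a₁ b₁ < sl a₂ b₂ := slope_lt _ _ _ _ ha₁ h₁ ha₂ h₂ hbb'
    have hD : (a₂.factorial : ℝ) < a₁.factorial + sl a₁ b₁ * ((a₂:ℝ) - a₁) :=
      conv_between a₁ a₂ b₁ ha₁ h12 hab
    set D : ℝ := a₁.factorial + sl a₁ b₁ * ((a₂:ℝ) - a₁) - a₂.factorial with hDdef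
    have hDpos : 0 < D := by simp [hDdef]; linarith
    have hspos : 0 < sl a₂ b₂ - sl a₁ b₁ := by linarith
    set x : ℝ := a₂ + D / (sl a₂ b₂ - sl a₁ b₁) with hxdef
    have hxge : (a₂:ℝ) ≤ x := by
      rw [hxdef]
      linarith [div_nonneg hDpos.le hspos.le]
    refine ⟨(x, (a₁.factorial : ℝ) + sl a₁ b₁ * (x - a₁)), ?_, ?_⟩
    · rw [mem_ray_iff _ _ h₁]
      exact ⟨by linarith [cast_lt h12], rfl⟩
    · rw [mem_ray_iff _ _ h₂]
      refine ⟨hxge, ?_⟩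
      simp only [hxdef, hDdef]
      field_simp
      ring
end Stmt5Aux

theorem stmt_5 (n : ℕ) (hn : 0 < n) (ℓ r : Fin n → ℕ)
    (hlr : ∀ i, 1 ≤ ℓ i ∧ ℓ i < r i)
    (hinj : Function.Injective (Sum.elim ℓ r : Fin n ⊕ Fin n → ℕ))
    (i j : Fin n) (hij : i ≠ j) :
    (ray (factPt (ℓ i)) (factPt (r i) - factPt (ℓ i)) ∩
      ray (factPt (ℓ j)) (factPt (r j) - factPt (ℓ j))).Nonempty ↔
    ((ℓ i < ℓ j ∧ ℓ j < r i ∧ r i < r j) ∨ (ℓ j < ℓ i ∧ ℓ i < r j ∧ r j < r i)) := by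
  have hll : ℓ i ≠ ℓ j := fun h => hij (by
    have := hinj (a₁ := Sum.inl i) (a₂ := Sum.inl j) (by simpa using h)
    simpa using this)
  have hrr : r i ≠ r j := fun h => hij (by
    have := hinj (a₁ := Sum.inr i) (a₂ := Sum.inr j) (by simpa using h)
    simpa using this)
  have hlrij : r i ≠ ℓ j := fun h => by
    have := hinj (a₁ := Sum.inr i) (a₂ := Sum.inl j) (by simpa using h)
    simp at this
  have hlrji : r j ≠ ℓ i := fun h => by
    have := hinj (a₁ := Sum.inr j) (a₂ := Sum.inl i) (by simpa using h)
    simp at this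
  rcases lt_trichotomy (ℓ i) (ℓ j) with h | h | h
  · rw [Stmt5Aux.key _ _ _ _ (hlr i).1 (hlr i).2 (hlr j).1 (hlr j).2 h hlrij hrr]
    omega
  · exact absurd h hll
  · rw [Set.inter_comm,
      Stmt5Aux.key _ _ _ _ (hlr j).1 (hlr j).2 (hlr i).1 (hlr i).2 h
        (fun hh => hlrji hh) (fun hh => hrr hh.symm)]
    omega
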